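/- In a tree T, for every vertex v there exists a peripheral vertex u (a vertex with ecc(u) = diam(T)) such that ecc(v) = d(v,u). Equivalently, ecc(v) = max over peripheral vertices u of d(v,u). -/

import Mathlib

open Finset

variable {V : Type*}

/-- Eccentricity: the maximum distance from `v` to any vertex. -/
noncomputable def ecc (G : SimpleGraph V) [Fintype V] (v : V) : ℕ :=
  Finset.univ.sup fun u => G.dist v u

/-- Diameter: the maximum eccentricity. -/
noncomputable def gdiam (G : SimpleGraph V) [Fintype V] : ℕ :=
  Finset.univ.sup fun v => ecc G v

/-- A vertex is peripheral if its eccentricity equals the diameter. -/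
noncomputable def peripheral (G : SimpleGraph V) [Fintype V] (v : V) : Prop :=
  ecc G v = gdiam G

/-- Normality: the minimum distance from `v` to a peripheral vertex. -/
noncomputable def gnorm (G : SimpleGraph V) [Fintype V] (v : V) : ℕ :=
  sInf {n | ∃ u, peripheral G u ∧ G.dist v u = n}

/-- The sum of normalities. -/
noncomputable def NormSum (G : SimpleGraph V) [Fintype V] : ℕ :=
  ∑ v, gnorm G v

/-- λ(v) = ecc(v) − norm(v). -/
noncomputable def lam (G : SimpleGraph V) [Fintype V] (v : V) : ℕ :=
  ecc G v - gnorm G v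

/-- Λ(T) = Σ_v λ(v). -/
noncomputable def LamSum (G : SimpleGraph V) [Fintype V] : ℕ :=
  ∑ v, lam G v

namespace TreePeriph

open SimpleGraph SimpleGraph.Walk

variable {G : SimpleGraph V} [DecidableEq V]

/-- In a tree, every path has length equal to the distance between its endpoints. -/
lemma dist_eq_length (hT : G.IsTree) {a b : V} (p : G.Walk a b) (hp : p.IsPath) :
    G.dist a b = p.length := by
  obtain ⟨q, hq⟩ := hT.isConnected.exists_walk_length_eq_dist a b
  have h1 : q.bypass = p := by
    obtain ⟨r, -, hr⟩ := hT.existsUnique_path a b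
    rw [hr _ q.bypass_isPath, hr _ hp]
  have h2 : G.dist a b ≤ p.length := SimpleGraph.dist_le p
  have h3 : p.length ≤ q.length := h1 ▸ q.length_bypass_le
  omega

/-- Splitting distances at a vertex on a path. -/
lemma dist_split (hT : G.IsTree) {a b m : V} (p : G.Walk a b) (hp : p.IsPath)
    (hm : m ∈ p.support) : G.dist a m + G.dist m b = G.dist a b := by
  have h1 := dist_eq_length hT (p.takeUntil m hm) (hp.takeUntil hm)
  have h2 := dist_eq_length hT (p.dropUntil m hm) (hp.dropUntil hm)
  have h3 := dist_eq_length hT p hp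
  have h4 : (p.takeUntil m hm).length + (p.dropUntil m hm).length = p.length := by
    conv_rhs => rw [← p.take_spec hm]
    rw [length_append]
  omega

/-- First vertex of a walk lying in a set. -/
lemma exists_first (S : Set V) {x v : V} (hv : v ∈ S) (P : G.Walk x v) :
    ∃ m, m ∈ S ∧ ∃ (q : G.Walk x m) (r : G.Walk m v), P = q.append r ∧
      ∀ y ∈ q.support, y ∈ S → y = m := by
  induction P with
  | nil =>
    exact ⟨_, hv, Walk.nil, Walk.nil, rfl, fun y hy _ => by simpa using hy⟩
  | @cons a c w h P ih =>
    by_cases ha : a ∈ S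
    · exact ⟨a, ha, Walk.nil, Walk.cons h P, rfl, fun y hy _ => by simpa using hy⟩
    · obtain ⟨m, hmS, q, r, hqr, hfirst⟩ := ih hv
      refine ⟨m, hmS, Walk.cons h q, r, by rw [hqr, cons_append], ?_⟩
      intro y hy hyS
      rw [support_cons, List.mem_cons] at hy
      rcases hy with rfl | hy
      · exact absurd hyS ha
      · exact hfirst y hy hyS

/-- The median vertex of `x`, `v`, `z` in a tree: it lies on the path from `v` to `z`
and splits all three distances. -/
lemma exists_median (hT : G.IsTree) (v z x : V) {W : G.Walk v z} (hW : W.IsPath) :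
    ∃ m, m ∈ W.support ∧
      G.dist x m + G.dist m v = G.dist x v ∧
      G.dist x m + G.dist m z = G.dist x z ∧
      G.dist v m + G.dist m z = G.dist v z := by
  obtain ⟨P, hP, -⟩ := hT.existsUnique_path x v
  obtain ⟨m, hmW, q, r, hqr, hfirst⟩ :=
    exists_first {y | y ∈ W.support} (W.start_mem_support) P
  have hmP : m ∈ P.support := by
    rw [hqr, mem_support_append_iff]; exact Or.inl q.end_mem_support
  have hq : q.IsPath := by rw [hqr] at hP; exact hP.of_append_left
  have h1 : G.dist x m + G.dist m v = G.dist x v := dist_split hT P hP hmP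
  have h3 : G.dist v m + G.dist m z = G.dist v z := dist_split hT W hW hmW
  have hdrop : (W.dropUntil m hmW).IsPath := hW.dropUntil hmW
  have hQ : (q.append (W.dropUntil m hmW)).IsPath := by
    rw [isPath_def, support_append, List.nodup_append]
    refine ⟨hq.support_nodup, hdrop.support_nodup.tail, ?_⟩
    intro y hyq y' hyd hyy'
    subst hyy'
    have hyW : y ∈ W.support :=
      support_dropUntil_subset W hmW (List.mem_of_mem_tail hyd)
    have hym : y = m := hfirst y hyq hyW
    subst hym
    have hnd := hdrop.support_nodup
    rw [(W.dropUntil y hmW).support_eq_cons] at hnd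
    exact (List.nodup_cons.mp hnd).1 (by simpa using hyd)
  have h2 : G.dist x m + G.dist m z = G.dist x z := by
    have hlen := dist_eq_length hT _ hQ
    rw [length_append] at hlen
    have e1 := dist_eq_length hT q hq
    have e2 := dist_eq_length hT _ hdrop
    omega
  exact ⟨m, hmW, h1, h2, h3⟩

/-- Betweenness on a path: of two vertices on a path from `v`, the one closer
to `v` is between `v` and the other. -/
lemma between_on_path (hT : G.IsTree) {v z m₁ m₂ : V} {W : G.Walk v z} (hW : W.IsPath)
    (h1 : m₁ ∈ W.support) (h2 : m₂ ∈ W.support) (hle : G.dist v m₁ ≤ G.dist v m₂) :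
    G.dist v m₁ + G.dist m₁ m₂ = G.dist v m₂ := by
  have htp : (W.takeUntil m₂ h2).IsPath := hW.takeUntil h2
  have hdp : (W.dropUntil m₂ h2).IsPath := hW.dropUntil h2
  have hm1 : m₁ ∈ (W.takeUntil m₂ h2).support ∨ m₁ ∈ (W.dropUntil m₂ h2).support := by
    rw [← mem_support_append_iff, take_spec]; exact h1
  rcases hm1 with hm1 | hm1
  · exact dist_split hT _ htp hm1
  · have hsplit : G.dist m₂ m₁ + G.dist m₁ z = G.dist m₂ z := dist_split hT _ hdp hm1
    have hvz : G.dist v m₂ + G.dist m₂ z = G.dist v z := dist_split hT W hW h2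
    have hvz1 : G.dist v m₁ + G.dist m₁ z = G.dist v z := dist_split hT W hW h1
    have hd12 : G.dist m₂ m₁ = 0 := by omega
    have heq : m₂ = m₁ := (hT.isConnected.dist_eq_zero_iff).mp hd12
    subst heq
    simp

lemma key (hT : G.IsTree) (v u p q : V) (hp : G.dist v p ≤ G.dist v u)
    (hq : G.dist v q ≤ G.dist v u) :
    G.dist p q ≤ G.dist u p ∨ G.dist p q ≤ G.dist u q := by
  obtain ⟨W, hW, -⟩ := hT.existsUnique_path v u
  obtain ⟨m₁, hm₁W, hp1, hp2, hp3⟩ := exists_median hT v u p hW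
  obtain ⟨m₂, hm₂W, hq1, hq2, hq3⟩ := exists_median hT v u q hW
  have tri : ∀ a b c : V, G.dist a c ≤ G.dist a b + G.dist b c := fun a b c =>
    hT.isConnected.dist_triangle (v := b)
  have comm : ∀ a b : V, G.dist a b = G.dist b a := fun a b => G.dist_comm
  rcases le_total (G.dist v m₁) (G.dist v m₂) with hle | hle
  · left
    have hbet := between_on_path hT hW hm₁W hm₂W hle
    have t1 := tri p m₁ q
    have t2 := tri m₁ m₂ q
    have c1 := comm m₁ p
    have c2 := comm m₁ v
    have c3 := comm m₂ v
    have c4 := comm m₂ q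
    have c5 := comm u p
    have c6 := comm m₁ u
    have c7 := comm v q
    have c8 := comm v p
    have c9 := comm m₁ q
    have c10 := comm m₂ u
    omega
  · right
    have hbet := between_on_path hT hW hm₂W hm₁W hle
    have t1 := tri q m₂ p
    have t2 := tri m₂ m₁ p
    have c1 := comm m₂ q
    have c2 := comm m₂ v
    have c3 := comm m₁ v
    have c4 := comm m₁ p
    have c5 := comm u q
    have c6 := comm m₂ u
    have c7 := comm v p
    have c8 := comm v q
    have c9 := comm m₂ p
    have c10 := comm m₁ u
    have c11 := comm p q
    omega

end TreePeriph

theorem stmt_1 [Fintype V] (G : SimpleGraph V) (hT : G.IsTree) (v : V) :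
    ∃ u : V, peripheral G u ∧ ecc G v = G.dist v u := by
  classical
  have hne : Nonempty V := ⟨v⟩
  obtain ⟨u, -, hu⟩ := Finset.exists_mem_eq_sup Finset.univ univ_nonempty
    (fun u => G.dist v u)
  refine ⟨u, ?_, hu⟩
  have hfar : ∀ w, G.dist v w ≤ G.dist v u := by
    intro w
    rw [← hu]
    exact Finset.le_sup (Finset.mem_univ w)
  have hge : ∀ p q : V, G.dist p q ≤ ecc G u := by
    intro p q
    rcases TreePeriph.key hT v u p q (hfar p) (hfar q) with h | h
    · calc G.dist p q ≤ G.dist u p := h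
        _ ≤ ecc G u := Finset.le_sup (Finset.mem_univ p)
    · calc G.dist p q ≤ G.dist u q := h
        _ ≤ ecc G u := Finset.le_sup (Finset.mem_univ q)
  have h1 : ecc G u ≤ gdiam G := Finset.le_sup (Finset.mem_univ u)
  have h2 : gdiam G ≤ ecc G u := by
    apply Finset.sup_le
    intro w _
    apply Finset.sup_le
    intro w' _
    exact hge w w'
  exact le_antisymm h1 h2
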